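/- Let A be a unital algebra equipped with a coproduct Δ : A → A ⊗ A (a linear map satisfying coassociativity). If g and h are both unital linear functionals on A satisfying the Haar invariance property (id ⊗ h)∘Δ = h(·)·1_A = (h ⊗ id)∘Δ and the same for g, then g = h. -/
import Mathlib

open TensorProduct

/-- A unital algebra with a coassociative coproduct admits at most one
unital linear functional with the Haar invariance property. -/
theorem haar_functional_unique {A : Type*} [Ring A] [Algebra ℂ A]
    (Δ : A →ₗ[ℂ] A ⊗[ℂ] A)
    (hcoassoc : ∀ a : A,
      (TensorProduct.map LinearMap.id Δ) (Δ a)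
        = (TensorProduct.assoc ℂ A A A) ((TensorProduct.map Δ LinearMap.id) (Δ a)))
    (g h : A →ₗ[ℂ] ℂ)
    (hg1 : g 1 = 1) (hh1 : h 1 = 1)
    (hgR : ∀ a : A, (TensorProduct.rid ℂ A) ((TensorProduct.map LinearMap.id g) (Δ a))
      = g a • (1 : A))
    (hgL : ∀ a : A, (TensorProduct.lid ℂ A) ((TensorProduct.map g LinearMap.id) (Δ a))
      = g a • (1 : A))
    (hhR : ∀ a : A, (TensorProduct.rid ℂ A) ((TensorProduct.map LinearMap.id h) (Δ a))
      = h a • (1 : A))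
    (hhL : ∀ a : A, (TensorProduct.lid ℂ A) ((TensorProduct.map h LinearMap.id) (Δ a))
      = h a • (1 : A)) :
    g = h := by
  ext a
  have key : ∀ t : A ⊗[ℂ] A,
      g ((TensorProduct.rid ℂ A) ((TensorProduct.map LinearMap.id h) t))
        = h ((TensorProduct.lid ℂ A) ((TensorProduct.map g LinearMap.id) t)) := by
    intro t
    induction t using TensorProduct.induction_on with
    | zero => simp
    | tmul x y => simp [mul_comm]
    | add x y hx hy => simp [hx, hy]
  have h1 := key (Δ a)
  rw [hhR a, hgL a, map_smul, map_smul, hg1, hh1] at h1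
  simpa using h1.symm
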